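/- For every natural number n and complex number z, |j_n(z)| ≤ √π·|z/2|^n·e^{|Im z|}/Γ(n+3/2), where j_n is the spherical Bessel function of order n. -/

import Mathlib

open MeasureTheory intervalIntegral Real Complex



noncomputable def Jint (k n : ℕ) : ℝ := ∫ t in (0:ℝ)..1, t ^ (2 * k) * (1 - t ^ 2) ^ n

lemma Jint_zero (k : ℕ) : Jint k 0 = 1 / (2 * k + 1) := by
  simp [Jint, integral_pow]

lemma Jint_rec (k n : ℕ) :
    (2 * (k:ℝ) + 1) * Jint k (n + 1) = 2 * ((n:ℝ) + 1) * Jint (k + 1) n := by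
  have hder : ∀ t : ℝ, HasDerivAt (fun t : ℝ => t ^ (2 * k + 1) * (1 - t ^ 2) ^ (n + 1))
      ((2 * (k:ℝ) + 1) * (t ^ (2 * k) * (1 - t ^ 2) ^ (n + 1))
        - 2 * ((n:ℝ) + 1) * (t ^ (2 * (k + 1)) * (1 - t ^ 2) ^ n)) t := by
    intro t
    have h1 : HasDerivAt (fun t : ℝ => t ^ (2 * k + 1)) ((2 * k + 1) * t ^ (2 * k)) t := by
      simpa using hasDerivAt_pow (2 * k + 1) t
    have h2 : HasDerivAt (fun t : ℝ => (1 - t ^ 2) ^ (n + 1))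
        ((n + 1 : ℕ) * (1 - t ^ 2) ^ n * (-(2 * t))) t := by
      have hg : HasDerivAt (fun t : ℝ => 1 - t ^ 2) (-(2 * t)) t := by
        simpa using ((hasDerivAt_pow 2 t).const_sub 1)
      exact (hg.pow (n + 1)).congr_deriv (by push_cast; ring)
    have : HasDerivAt (fun t : ℝ => t ^ (2 * k + 1) * (1 - t ^ 2) ^ (n + 1)) _ t := h1.mul h2
    convert this using 1
    push_cast
    ring
  have hint : ∫ t in (0:ℝ)..1, ((2 * (k:ℝ) + 1) * (t ^ (2 * k) * (1 - t ^ 2) ^ (n + 1))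
      - 2 * ((n:ℝ) + 1) * (t ^ (2 * (k + 1)) * (1 - t ^ 2) ^ n)) = 0 := by
    rw [integral_eq_sub_of_hasDerivAt (fun t _ => hder t)]
    · norm_num
    · apply Continuous.intervalIntegrable
      continuity
  have hi1 : IntervalIntegrable (fun t : ℝ => t ^ (2 * k) * (1 - t ^ 2) ^ (n + 1))
      volume 0 1 := by apply Continuous.intervalIntegrable; continuity
  have hi2 : IntervalIntegrable (fun t : ℝ => t ^ (2 * (k + 1)) * (1 - t ^ 2) ^ n)
      volume 0 1 := by apply Continuous.intervalIntegrable; continuity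
  rw [integral_sub ((hi1.const_mul _)) ((hi2.const_mul _)), intervalIntegral.integral_const_mul,
    intervalIntegral.integral_const_mul] at hint
  unfold Jint
  linarith

lemma Jint_eq (n k : ℕ) : Jint k n =
    2 * 4 ^ n * (2 * k).factorial * n.factorial * (k + n + 1).factorial /
      (k.factorial * (2 * k + 2 * n + 2).factorial) := by
  induction n generalizing k with
  | zero =>
    rw [Jint_zero]
    have h1 : (2 * k + 0 + 2) = (2 * k + 1) + 1 := by ring
    rw [h1]
    have e1 : ((2 * k + 1 + 1).factorial : ℝ)
        = (2 * k + 2) * ((2 * k + 1) * (2 * k).factorial) := by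
      rw [Nat.factorial_succ, Nat.factorial_succ]; push_cast; ring
    have e2 : ((k + 0 + 1).factorial : ℝ) = (k + 1) * k.factorial := by
      rw [Nat.factorial_succ]; push_cast; ring
    rw [e1, e2]
    have h2k : (2 * (k:ℝ) + 1) ≠ 0 := by positivity
    have hf : ((2*k).factorial : ℝ) ≠ 0 := by positivity
    have hf2 : (k.factorial : ℝ) ≠ 0 := by positivity
    field_simp
    ring
  | succ n ih =>
    have h2k : (2 * (k:ℝ) + 1) ≠ 0 := by positivity
    have := Jint_rec k n
    have hJ : Jint k (n+1) = 2 * ((n:ℝ) + 1) * Jint (k+1) n / (2 * (k:ℝ) + 1) := by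
      field_simp at this ⊢; linarith
    rw [hJ, ih (k+1)]
    have e1 : (2 * (k+1)) = (2 * k + 1) + 1 := by ring
    have e2 : ((2 * (k+1)).factorial : ℝ)
        = (2 * k + 2) * ((2 * k + 1) * (2 * k).factorial) := by
      rw [e1, Nat.factorial_succ, Nat.factorial_succ]; push_cast; ring
    have e3 : ((k+1).factorial : ℝ) = (k + 1) * k.factorial := by
      rw [Nat.factorial_succ]; push_cast; ring
    have e4 : ((n+1).factorial : ℝ) = (n + 1) * n.factorial := by
      rw [Nat.factorial_succ]; push_cast; ring
    have e5 : k + 1 + n + 1 = k + (n + 1) + 1 := by ring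
    have e6 : 2 * (k+1) + 2 * n + 2 = 2 * k + 2 * (n+1) + 2 := by ring
    rw [e2, e3, e5, e6, e4]
    have hf : ((2*k).factorial : ℝ) ≠ 0 := by positivity
    have hf2 : (k.factorial : ℝ) ≠ 0 := by positivity
    have hf3 : ((2 * k + 2 * (n+1) + 2).factorial : ℝ) ≠ 0 := by positivity
    have hk1 : ((k:ℝ) + 1) ≠ 0 := by positivity
    field_simp
    ring

lemma Gamma_half (m : ℕ) :
    Real.Gamma ((m:ℝ) + 1/2) = Real.sqrt Real.pi * (2*m).factorial / (4 ^ m * m.factorial) := by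
  induction m with
  | zero => simpa using Real.Gamma_one_half_eq
  | succ m ih =>
    have hne : (m:ℝ) + 1/2 ≠ 0 := by positivity
    have : ((m:ℕ):ℝ) + 1 + 1/2 = ((m:ℝ) + 1/2) + 1 := by ring
    rw [show ((m+1:ℕ):ℝ) + 1/2 = ((m:ℝ) + 1/2) + 1 by push_cast; ring,
      Real.Gamma_add_one hne, ih]
    have e2 : ((2 * (m+1)).factorial : ℝ)
        = (2 * m + 2) * ((2 * m + 1) * (2 * m).factorial) := by
      rw [show 2 * (m+1) = (2 * m + 1) + 1 by ring, Nat.factorial_succ, Nat.factorial_succ]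
      push_cast; ring
    have e3 : ((m+1).factorial : ℝ) = (m + 1) * m.factorial := by
      rw [Nat.factorial_succ]; push_cast; ring
    rw [e2, e3]
    have hf : ((2*m).factorial : ℝ) ≠ 0 := by positivity
    have hf2 : ((m).factorial : ℝ) ≠ 0 := by positivity
    have h4 : ((4:ℝ)) ^ m ≠ 0 := by positivity
    field_simp
    ring

lemma int_even_real (k n : ℕ) :
    (∫ t in (-1:ℝ)..1, t ^ (2*k) * (1 - t^2) ^ n) = 2 * Jint k n := by
  have hi : ∀ a b : ℝ, IntervalIntegrable (fun t : ℝ => t ^ (2*k) * (1 - t^2) ^ n) volume a b :=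
    fun a b => by apply Continuous.intervalIntegrable; continuity
  have hsplit := integral_add_adjacent_intervals (hi (-1) 0) (hi 0 1)
  have hneg : (∫ t in (-1:ℝ)..0, t ^ (2*k) * (1 - t^2) ^ n) = Jint k n := by
    have := integral_comp_neg (a := (0:ℝ)) (b := 1)
      (f := fun t : ℝ => t ^ (2*k) * (1 - t^2) ^ n)
    simp only [neg_zero] at this
    rw [← this]
    unfold Jint
    congr 1
    ext t
    rw [neg_pow, neg_pow]
    simp [pow_mul]
  rw [← hsplit, hneg, Jint]
  ring

lemma int_odd_real (k n : ℕ) :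
    (∫ t in (-1:ℝ)..1, t ^ (2*k+1) * (1 - t^2) ^ n) = 0 := by
  have hi : ∀ a b : ℝ, IntervalIntegrable (fun t : ℝ => t ^ (2*k+1) * (1 - t^2) ^ n) volume a b :=
    fun a b => by apply Continuous.intervalIntegrable; continuity
  have hsplit := integral_add_adjacent_intervals (hi (-1) 0) (hi 0 1)
  have hneg : (∫ t in (-1:ℝ)..0, t ^ (2*k+1) * (1 - t^2) ^ n)
      = - ∫ t in (0:ℝ)..1, t ^ (2*k+1) * (1 - t^2) ^ n := by
    have := integral_comp_neg (a := (0:ℝ)) (b := 1)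
      (f := fun t : ℝ => t ^ (2*k+1) * (1 - t^2) ^ n)
    simp only [neg_zero] at this
    rw [← this, ← intervalIntegral.integral_neg]
    congr 1
    ext t
    have h1 : (-t) ^ (2*k+1) = -(t ^ (2*k+1)) := Odd.neg_pow ⟨k, by ring⟩ t
    rw [h1]
    have : (-t)^2 = t^2 := by ring
    rw [this]
    ring
  rw [← hsplit, hneg]
  ring

lemma int_even (k n : ℕ) :
    (∫ t in (-1:ℝ)..1, (t:ℂ) ^ (2*k) * (1 - (t:ℂ)^2) ^ n) = ((2 * Jint k n : ℝ) : ℂ) := by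
  rw [← int_even_real k n, ← intervalIntegral.integral_ofReal]
  congr 1
  ext t
  push_cast
  ring

lemma int_odd (k n : ℕ) :
    (∫ t in (-1:ℝ)..1, (t:ℂ) ^ (2*k+1) * (1 - (t:ℂ)^2) ^ n) = 0 := by
  have : ((0:ℝ):ℂ) = 0 := by norm_num
  rw [← this, ← int_odd_real k n, ← intervalIntegral.integral_ofReal]
  congr 1
  ext t
  push_cast
  ring


/-- Spherical Bessel function of the first kind of order n, as an entire function,
defined via its power series. -/
noncomputable def sphj (n : ℕ) (z : ℂ) : ℂ :=
  ((Real.sqrt Real.pi / 2 : ℝ) : ℂ) *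
    ∑' k : ℕ, ((-1) ^ k / ((Nat.factorial k : ℂ) * Complex.Gamma ((k : ℂ) + n + 3 / 2))) *
      (z / 2) ^ (2 * k + n)

lemma Gamma_eq (n k : ℕ) : Complex.Gamma ((k : ℂ) + n + 3 / 2)
    = ((Real.sqrt Real.pi * (2*(k+n+1)).factorial / (4 ^ (k+n+1) * (k+n+1).factorial) : ℝ) : ℂ) := by
  have h1 : ((k : ℂ) + n + 3 / 2) = ((((k+n+1 : ℕ) : ℝ) + 1/2 : ℝ) : ℂ) := by
    push_cast; ring
  rw [h1, Complex.Gamma_ofReal, Gamma_half]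

set_option maxHeartbeats 1000000 in
lemma coeff_eq (n k : ℕ) (z : ℂ) :
    ((Real.sqrt Real.pi / 2 : ℝ) : ℂ) *
      (((-1) ^ k / ((Nat.factorial k : ℂ) * Complex.Gamma ((k : ℂ) + n + 3 / 2))) *
        (z / 2) ^ (2 * k + n))
    = (z ^ n / (2 ^ (n+1) * n.factorial)) * ((Complex.I * z) ^ (2*k) / (2*k).factorial) *
        ((2 * Jint k n : ℝ) : ℂ) := by
  have hIz : (Complex.I * z) ^ (2*k) = (-1) ^ k * z ^ (2*k) := by
    rw [mul_pow, pow_mul, Complex.I_sq]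
  rw [Gamma_eq, Jint_eq, hIz]
  have hsq : (Real.sqrt Real.pi) ^ 2 = Real.pi := Real.sq_sqrt Real.pi_pos.le
  have hs : (Real.sqrt Real.pi) ≠ 0 := by positivity
  have hsC : ((Real.sqrt Real.pi : ℝ) : ℂ) ≠ 0 := by exact_mod_cast hs
  have hf1 : ((k.factorial : ℂ)) ≠ 0 := by exact_mod_cast k.factorial_ne_zero
  have hf2 : ((n.factorial : ℂ)) ≠ 0 := by exact_mod_cast n.factorial_ne_zero
  have hf3 : (((2*k).factorial : ℂ)) ≠ 0 := by exact_mod_cast (2*k).factorial_ne_zero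
  have hf4 : (((k+n+1).factorial : ℂ)) ≠ 0 := by exact_mod_cast (k+n+1).factorial_ne_zero
  have hf5 : (((2*(k+n+1)).factorial : ℂ)) ≠ 0 := by exact_mod_cast (2*(k+n+1)).factorial_ne_zero
  have hf6 : (((2*k+2*n+2).factorial : ℂ)) ≠ 0 := by exact_mod_cast (2*k+2*n+2).factorial_ne_zero
  have h4 : ((4:ℂ)) ^ (k+n+1) ≠ 0 := by norm_num
  have h4' : ((4:ℂ)) ^ n ≠ 0 := by norm_num
  have h2 : ((2:ℂ)) ^ (n+1) ≠ 0 := by norm_num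
  have h2' : ((2:ℂ)) ^ (2*k+n) ≠ 0 := by norm_num
  have hee : (2*(k+n+1)) = 2*k+2*n+2 := by ring
  rw [hee]
  push_cast
  rw [div_pow]
  field_simp
  rw [show (2:ℂ)^(2*k+n) = 4^k * 2^n by rw [pow_add, pow_mul]; norm_num]
  ring

lemma norm_integrand_le (m n : ℕ) {t : ℝ} (h1 : -1 ≤ t) (h2 : t ≤ 1) :
    ‖(t:ℂ) ^ m * (1 - (t:ℂ)^2) ^ n‖ ≤ 1 := by
  have habs : |t| ≤ 1 := abs_le.2 ⟨h1, h2⟩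
  have e : (1 - (t:ℂ)^2) = ((1 - t^2 : ℝ) : ℂ) := by push_cast; ring
  rw [norm_mul, norm_pow, norm_pow, Complex.norm_real, e, Complex.norm_real]
  have h1' : |t| ^ m ≤ 1 := pow_le_one₀ (abs_nonneg t) habs
  have h2' : |1 - t^2| ≤ 1 := by
    rw [abs_le]
    constructor <;> nlinarith [sq_nonneg t, abs_le.1 habs]
  have h2'' : |1 - t^2| ^ n ≤ 1 := pow_le_one₀ (abs_nonneg _) h2'
  calc |t| ^ m * |1 - t^2| ^ n ≤ 1 * 1 := by
        apply mul_le_mul h1' h2'' (by positivity) (by norm_num)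
    _ = 1 := by norm_num

lemma hIg_bound (m n : ℕ) : ‖∫ t in (-1:ℝ)..1, (t:ℂ) ^ m * (1 - (t:ℂ)^2) ^ n‖ ≤ 2 := by
  have := intervalIntegral.norm_integral_le_of_norm_le_const (a := (-1:ℝ)) (b := 1) (C := 1)
    (f := fun t : ℝ => (t:ℂ) ^ m * (1 - (t:ℂ)^2) ^ n) ?_
  · refine le_trans this (by norm_num)
  · intro x hx
    rw [Set.uIoc_of_le (by norm_num : (-1:ℝ) ≤ 1)] at hx
    exact norm_integrand_le m n hx.1.le hx.2

lemma sphj_integral (n : ℕ) (z : ℂ) :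
    sphj n z = z ^ n / (2 ^ (n+1) * (n.factorial : ℂ)) *
      ∫ t in (-1:ℝ)..1, Complex.exp (Complex.I * z * t) * (1 - (t:ℂ)^2) ^ n := by
  set c : ℂ := z ^ n / (2 ^ (n+1) * (n.factorial : ℂ)) with hc
  set g : ℕ → ℂ := fun m => c * ((Complex.I * z) ^ m / (m.factorial : ℂ)) *
      ∫ t in (-1:ℝ)..1, (t:ℂ) ^ m * (1 - (t:ℂ)^2) ^ n with hg
  have hcont : ∀ m : ℕ, Continuous (fun t : ℝ => (t:ℂ) ^ m * (1 - (t:ℂ)^2) ^ n) := by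
    intro m
    exact (Complex.continuous_ofReal.pow m).mul
      ((continuous_const.sub (Complex.continuous_ofReal.pow 2)).pow n)
  have hnormIz : ‖Complex.I * z‖ = ‖z‖ := by
    rw [norm_mul, Complex.norm_I, one_mul]
  have hgsum : Summable g := by
    apply Summable.of_norm
    apply Summable.of_nonneg_of_le (fun m => norm_nonneg _)
      (fun m => ?_) (((Real.summable_pow_div_factorial ‖z‖).mul_right 2).mul_left ‖c‖)
    rw [hg]
    simp only
    rw [norm_mul, norm_mul]
    have h1 : ‖(Complex.I * z) ^ m / (m.factorial : ℂ)‖ = ‖z‖ ^ m / (m.factorial : ℝ) := by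
      rw [norm_div, norm_pow, hnormIz, Complex.norm_natCast]
    rw [h1, mul_assoc]
    refine mul_le_mul_of_nonneg_left ?_ (norm_nonneg c)
    exact mul_le_mul_of_nonneg_left (hIg_bound m n) (by positivity)
  have heven : ∀ k : ℕ, ((Real.sqrt Real.pi / 2 : ℝ) : ℂ) *
      (((-1) ^ k / ((Nat.factorial k : ℂ) * Complex.Gamma ((k : ℂ) + n + 3 / 2))) *
        (z / 2) ^ (2 * k + n)) = g (2 * k) := by
    intro k
    rw [coeff_eq n k z, hg]
    simp only
    rw [int_even k n, hc]
  have hodd : ∀ k : ℕ, g (2 * k + 1) = 0 := by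
    intro k
    rw [hg]
    simp only
    rw [int_odd k n, mul_zero]
  have hswap : (∑' m : ℕ, ((Complex.I * z) ^ m / (m.factorial : ℂ)) *
        ∫ t in (-1:ℝ)..1, (t:ℂ) ^ m * (1 - (t:ℂ)^2) ^ n)
      = ∫ t in (-1:ℝ)..1, Complex.exp (Complex.I * z * t) * (1 - (t:ℂ)^2) ^ n := by
    have hFrw : ∀ m : ℕ, ((Complex.I * z) ^ m / (m.factorial : ℂ)) *
          ∫ t in (-1:ℝ)..1, (t:ℂ) ^ m * (1 - (t:ℂ)^2) ^ n
        = ∫ t in Set.Ioc (-1:ℝ) 1,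
            ((Complex.I * z) ^ m / (m.factorial : ℂ)) * ((t:ℂ) ^ m * (1 - (t:ℂ)^2) ^ n) := by
      intro m
      rw [← intervalIntegral.integral_const_mul,
        intervalIntegral.integral_of_le (by norm_num : (-1:ℝ) ≤ 1)]
    simp_rw [hFrw]
    have hint : ∀ m : ℕ, MeasureTheory.Integrable
        (fun t : ℝ => ((Complex.I * z) ^ m / (m.factorial : ℂ)) *
          ((t:ℂ) ^ m * (1 - (t:ℂ)^2) ^ n)) (MeasureTheory.volume.restrict (Set.Ioc (-1:ℝ) 1)) :=
      fun m => (continuous_const.mul (hcont m)).integrableOn_Ioc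
    have hsumnorm : Summable (fun m : ℕ => ∫ t in Set.Ioc (-1:ℝ) 1,
        ‖((Complex.I * z) ^ m / (m.factorial : ℂ)) * ((t:ℂ) ^ m * (1 - (t:ℂ)^2) ^ n)‖) := by
      apply Summable.of_nonneg_of_le
        (fun m => MeasureTheory.integral_nonneg (fun t => norm_nonneg _)) (fun m => ?_)
        ((Real.summable_pow_div_factorial ‖z‖).mul_right 2)
      have hb : ∀ t ∈ Set.Ioc (-1:ℝ) 1,
          ‖((Complex.I * z) ^ m / (m.factorial : ℂ)) * ((t:ℂ) ^ m * (1 - (t:ℂ)^2) ^ n)‖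
            ≤ ‖z‖ ^ m / (m.factorial : ℝ) := by
        intro t ht
        rw [norm_mul, norm_div, norm_pow, hnormIz, Complex.norm_natCast]
        calc ‖z‖ ^ m / (m.factorial : ℝ) * ‖(t:ℂ) ^ m * (1 - (t:ℂ)^2) ^ n‖
            ≤ ‖z‖ ^ m / (m.factorial : ℝ) * 1 :=
              mul_le_mul_of_nonneg_left (norm_integrand_le m n ht.1.le ht.2) (by positivity)
          _ = ‖z‖ ^ m / (m.factorial : ℝ) := by ring
      calc (∫ t in Set.Ioc (-1:ℝ) 1,
            ‖((Complex.I * z) ^ m / (m.factorial : ℂ)) * ((t:ℂ) ^ m * (1 - (t:ℂ)^2) ^ n)‖)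
          ≤ ∫ _t in Set.Ioc (-1:ℝ) 1, (‖z‖ ^ m / (m.factorial : ℝ)) := by
            apply MeasureTheory.setIntegral_mono_on (hint m).norm
              (MeasureTheory.integrableOn_const (by simp) (by simp))
              measurableSet_Ioc hb
        _ = ‖z‖ ^ m / (m.factorial : ℝ) * 2 := by
            rw [MeasureTheory.setIntegral_const]
            simp [Real.volume_Ioc]
            ring
    rw [MeasureTheory.integral_tsum_of_summable_integral_norm hint hsumnorm,
      ← intervalIntegral.integral_of_le (by norm_num : (-1:ℝ) ≤ 1)]
    apply intervalIntegral.integral_congr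
    intro t _
    simp only
    have hterm : ∀ m : ℕ, ((Complex.I * z) ^ m / (m.factorial : ℂ)) *
        ((t:ℂ) ^ m * (1 - (t:ℂ)^2) ^ n)
        = ((Complex.I * z * t) ^ m / (m.factorial : ℂ)) * (1 - (t:ℂ)^2) ^ n := by
      intro m
      rw [mul_pow (Complex.I * z)]
      ring
    rw [tsum_congr hterm, tsum_mul_right]
    congr 1
    rw [Complex.exp_eq_exp_ℂ, NormedSpace.exp_eq_tsum_div]
  have h2inj : Function.Injective (fun k : ℕ => 2 * k) := fun a b h => by dsimp at h; omega
  have h2inj' : Function.Injective (fun k : ℕ => 2 * k + 1) := fun a b h => by dsimp at h; omega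
  calc sphj n z = ∑' k : ℕ, g (2 * k) := by
        rw [sphj, ← tsum_mul_left]
        exact tsum_congr heven
    _ = ∑' k : ℕ, g (2 * k) + ∑' k : ℕ, g (2 * k + 1) := by
        rw [tsum_congr hodd]
        simp
    _ = ∑' m : ℕ, g m :=
        tsum_even_add_odd (hgsum.comp_injective h2inj) (hgsum.comp_injective h2inj')
    _ = c * ∑' m : ℕ, ((Complex.I * z) ^ m / (m.factorial : ℂ)) *
          ∫ t in (-1:ℝ)..1, (t:ℂ) ^ m * (1 - (t:ℂ)^2) ^ n := by
        rw [← tsum_mul_left]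
        apply tsum_congr
        intro m
        rw [hg]
        ring
    _ = c * ∫ t in (-1:ℝ)..1, Complex.exp (Complex.I * z * t) * (1 - (t:ℂ)^2) ^ n := by
        rw [hswap]

lemma two_J0 (n : ℕ) : 2 * Jint 0 n
    = Real.sqrt Real.pi * n.factorial / Real.Gamma ((n : ℝ) + 3 / 2) := by
  have hG : Real.Gamma ((n : ℝ) + 3 / 2)
      = Real.sqrt Real.pi * (2*(n+1)).factorial / (4 ^ (n+1) * (n+1).factorial) := by
    have : ((n : ℝ) + 3 / 2) = (((n+1 : ℕ) : ℝ) + 1/2) := by push_cast; ring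
    rw [this, Gamma_half]
  rw [hG, Jint_eq n 0]
  have hs : Real.sqrt Real.pi ≠ 0 := by positivity
  have e1 : (2*0+2*n+2) = 2*(n+1) := by ring
  have e2 : (0+n+1) = n+1 := by ring
  rw [e1, e2]
  have hf1 : (((2*(n+1)).factorial : ℝ)) ≠ 0 := by positivity
  have hf2 : (((n+1).factorial : ℝ)) ≠ 0 := by positivity
  have h4 : ((4:ℝ))^(n+1) ≠ 0 := by positivity
  rw [Nat.factorial_zero]
  field_simp
  ring

theorem sphj_bound (n : ℕ) (z : ℂ) :
    ‖sphj n z‖ ≤ Real.sqrt Real.pi * (‖z‖ / 2) ^ n * Real.exp |z.im| /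
      Real.Gamma ((n : ℝ) + 3 / 2) := by
  have hGpos : 0 < Real.Gamma ((n : ℝ) + 3 / 2) := Real.Gamma_pos_of_pos (by positivity)
  rw [sphj_integral, norm_mul]
  have hc : ‖z ^ n / (2 ^ (n+1) * (n.factorial : ℂ))‖
      = ‖z‖ ^ n / (2 ^ (n+1) * (n.factorial : ℝ)) := by
    rw [norm_div, norm_pow, norm_mul, norm_pow, Complex.norm_natCast]
    norm_num
  rw [hc]
  -- bound the integral
  have hcont1 : Continuous (fun t : ℝ => Complex.exp (Complex.I * z * t) * (1 - (t:ℂ)^2) ^ n) :=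
    (Complex.continuous_exp.comp (continuous_const.mul Complex.continuous_ofReal)).mul
      ((continuous_const.sub (Complex.continuous_ofReal.pow 2)).pow n)
  have hptw : ∀ t ∈ Set.Icc (-1:ℝ) 1,
      ‖Complex.exp (Complex.I * z * t) * (1 - (t:ℂ)^2) ^ n‖
        ≤ Real.exp |z.im| * (1 - t^2) ^ n := by
    intro t ht
    rw [norm_mul]
    have hre : (Complex.I * z * (t:ℂ)).re = -z.im * t := by
      simp [Complex.mul_re, Complex.mul_im, Complex.I_re, Complex.I_im]
    have h1 : ‖Complex.exp (Complex.I * z * t)‖ ≤ Real.exp |z.im| := by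
      rw [Complex.norm_exp, hre]
      apply Real.exp_le_exp.2
      have habs : |t| ≤ 1 := abs_le.2 ⟨ht.1, ht.2⟩
      calc -z.im * t ≤ |(-z.im) * t| := le_abs_self _
        _ = |z.im| * |t| := by rw [abs_mul, abs_neg]
        _ ≤ |z.im| * 1 := mul_le_mul_of_nonneg_left habs (abs_nonneg _)
        _ = |z.im| := by ring
    have ht2 : t^2 ≤ 1 := by nlinarith [ht.1, ht.2]
    have h2 : ‖(1 - (t:ℂ)^2) ^ n‖ = (1 - t^2) ^ n := by
      have e : (1 - (t:ℂ)^2) = ((1 - t^2 : ℝ) : ℂ) := by push_cast; ring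
      rw [norm_pow, e, Complex.norm_real, Real.norm_eq_abs, _root_.abs_of_nonneg (by linarith : (0:ℝ) ≤ 1 - t^2)]
    rw [h2]
    exact mul_le_mul_of_nonneg_right h1 (pow_nonneg (by linarith) n)
  have hInorm : ‖∫ t in (-1:ℝ)..1, Complex.exp (Complex.I * z * t) * (1 - (t:ℂ)^2) ^ n‖
      ≤ Real.exp |z.im| * (2 * Jint 0 n) := by
    calc ‖∫ t in (-1:ℝ)..1, Complex.exp (Complex.I * z * t) * (1 - (t:ℂ)^2) ^ n‖
        ≤ ∫ t in (-1:ℝ)..1, ‖Complex.exp (Complex.I * z * t) * (1 - (t:ℂ)^2) ^ n‖ :=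
          intervalIntegral.norm_integral_le_integral_norm (by norm_num)
      _ ≤ ∫ t in (-1:ℝ)..1, Real.exp |z.im| * (1 - t^2) ^ n := by
          apply intervalIntegral.integral_mono_on (by norm_num)
          · exact (hcont1.norm).intervalIntegrable _ _
          · exact (Continuous.intervalIntegrable (by continuity) _ _)
          · exact hptw
      _ = Real.exp |z.im| * ∫ t in (-1:ℝ)..1, (1 - t^2) ^ n :=
          intervalIntegral.integral_const_mul _ _
      _ = Real.exp |z.im| * (2 * Jint 0 n) := by
          congr 1
          rw [← int_even_real 0 n]
          apply intervalIntegral.integral_congr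
          intro t _
          simp
  calc ‖z‖ ^ n / (2 ^ (n+1) * (n.factorial : ℝ)) *
        ‖∫ t in (-1:ℝ)..1, Complex.exp (Complex.I * z * t) * (1 - (t:ℂ)^2) ^ n‖
      ≤ ‖z‖ ^ n / (2 ^ (n+1) * (n.factorial : ℝ)) *
          (Real.exp |z.im| * (2 * Jint 0 n)) :=
        mul_le_mul_of_nonneg_left hInorm (by positivity)
    _ = Real.sqrt Real.pi * (‖z‖ / 2) ^ n * Real.exp |z.im| /
          (2 * Real.Gamma ((n : ℝ) + 3 / 2)) := by
        rw [two_J0]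
        have hf : ((n.factorial : ℝ)) ≠ 0 := by positivity
        have h2 : ((2:ℝ))^(n+1) ≠ 0 := by positivity
        rw [div_pow]
        field_simp
        ring
    _ ≤ Real.sqrt Real.pi * (‖z‖ / 2) ^ n * Real.exp |z.im| /
          Real.Gamma ((n : ℝ) + 3 / 2) := by
        apply div_le_div_of_nonneg_left (by positivity) hGpos (by linarith)
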